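/- arXiv:2508.12299 — 3 statements merged into one kernel-verified Lean document; each statement's English description precedes it below -/
import Mathlib

section
/- Let s = 1/(2d), d ≥ 3, and for integers l, m, n, r ≥ 1 define η₁[l,m,n,r](x) = Σ_{u} D^{*2}(u)^l D(x-u)^m Σ_{s'} D(s')^n D(u-s')^r, where D is the nearest-neighbor step distribution on Z^d (sums over u, s' ∈ Z^d). Then: η₁[l,m,n,r](e_1) = s^{l+m+n+r-1} (1 + 2^{l+1} s^l − (2^{l+2} − 1) s^{l+1}), η₁[l,m,n,r](2e_1+e_2) = s^{2l+m+n+r}(1 + 2^{l+1}), and η₁[l,m,n,r](e_1+e_2+e_3) = 3·2^{l+1} s^{2l+m+n+r}. -/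
open scoped BigOperators

noncomputable def nnD (d : ℕ) (x : Fin d → ℤ) : ℝ :=
  if (∑ i, (x i).natAbs) = 1 then 1 / (2 * d) else 0

noncomputable def conv {d : ℕ} (f g : (Fin d → ℤ) → ℝ) (x : Fin d → ℤ) : ℝ :=
  ∑' y : Fin d → ℤ, f y * g (x - y)

/-- `η₁[l,m,n,r](x) = ∑_u D^{*2}(u)^l D(x-u)^m ∑_{s'} D(s')^n D(u-s')^r`. -/
noncomputable def eta1 (d l m n r : ℕ) (x : Fin d → ℤ) : ℝ :=
  ∑' u : Fin d → ℤ,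
    (conv (nnD d) (nnD d) u) ^ l * nnD d (x - u) ^ m *
      ∑' s' : Fin d → ℤ, nnD d s' ^ n * nnD d (u - s') ^ r

namespace Eta1Aux

variable {d : ℕ}

def S (u : Fin d → ℤ) : ℕ := ∑ i, (u i).natAbs

def pt (d : ℕ) (p : Fin d × Bool) : Fin d → ℤ :=
  Pi.single p.1 (if p.2 then (1 : ℤ) else -1)

lemma nnD_eq (x : Fin d → ℤ) : nnD d x = if S x = 1 then 1 / (2 * (d : ℝ)) else 0 := rfl

lemma S_pt (p : Fin d × Bool) : S (pt d p) = 1 := by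
  unfold S pt
  rw [Finset.sum_eq_single p.1]
  · cases p.2 <;> simp
  · intro b _ hb
    rw [Pi.single_eq_of_ne hb]
    rfl
  · simp

lemma pt_inj : Function.Injective (pt d) := by
  rintro ⟨i, b⟩ ⟨j, c⟩ h
  have hi := congrFun h i
  simp only [pt, Pi.single_eq_same] at hi
  by_cases hij : i = j
  · subst hij
    rw [Pi.single_eq_same] at hi
    cases b <;> cases c <;> simp_all
  · rw [Pi.single_eq_of_ne hij] at hi
    cases b <;> norm_num at hi

lemma S_split (u : Fin d → ℤ) (j : Fin d) :
    S u = (u j).natAbs + ∑ k ∈ Finset.univ.erase j, (u k).natAbs :=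
  (Finset.add_sum_erase _ _ (Finset.mem_univ j)).symm

lemma erase_sum (u : Fin d → ℤ) (k : Fin d) :
    ∑ j ∈ Finset.univ.erase k, (u j).natAbs = S u - (u k).natAbs := by
  have := S_split u k; omega

lemma S_sub_single (u : Fin d → ℤ) (j : Fin d) (σ : ℤ) :
    S (u - Pi.single j σ) = (u j - σ).natAbs + (S u - (u j).natAbs) := by
  have h1 := S_split (u - Pi.single j σ) j
  have h3 : ∀ k ∈ Finset.univ.erase j, (((u - Pi.single j σ : Fin d → ℤ)) k).natAbs = (u k).natAbs :=
    fun k hk => by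
      rw [Pi.sub_apply, Pi.single_eq_of_ne (Finset.ne_of_mem_erase hk), sub_zero]
  rw [Finset.sum_congr rfl h3, erase_sum u j] at h1
  have h4 : (u - Pi.single j σ : Fin d → ℤ) j = u j - σ := by simp
  rw [h4] at h1
  exact h1

lemma S_add_single (u : Fin d → ℤ) (j : Fin d) (c : ℤ) (h : u j = 0) :
    S (u + Pi.single j c) = S u + c.natAbs := by
  have h1 := S_split (u + Pi.single j c) j
  have h3 : ∀ k ∈ Finset.univ.erase j, (((u + Pi.single j c : Fin d → ℤ)) k).natAbs = (u k).natAbs :=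
    fun k hk => by
      rw [Pi.add_apply, Pi.single_eq_of_ne (Finset.ne_of_mem_erase hk), add_zero]
  rw [Finset.sum_congr rfl h3, erase_sum u j] at h1
  have h4 : (u + Pi.single j c : Fin d → ℤ) j = c := by simp [h]
  rw [h4] at h1
  have h5 := S_split u j
  rw [h] at h5
  simp at h5
  omega

lemma S_zero : S (0 : Fin d → ℤ) = 0 := by simp [S]

lemma S_single (i : Fin d) (c : ℤ) : S (Pi.single i c) = c.natAbs := by
  have := S_add_single (0 : Fin d → ℤ) i c rfl
  simpa [S_zero] using this

lemma exists_pt {y : Fin d → ℤ} (h : S y = 1) : ∃ p, y = pt d p := by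
  have h1 : ∃ i, (y i).natAbs ≠ 0 := by
    by_contra hc
    push_neg at hc
    simp only [S] at h
    rw [Finset.sum_eq_zero (fun i _ => hc i)] at h
    omega
  obtain ⟨i, hi⟩ := h1
  have hsplit := S_split y i
  rw [h] at hsplit
  have hyi : (y i).natAbs = 1 := by omega
  have hzero : ∑ k ∈ Finset.univ.erase i, (y k).natAbs = 0 := by omega
  have hrest : ∀ j, j ≠ i → y j = 0 := by
    intro j hj
    have := (Finset.sum_eq_zero_iff.mp hzero) j (Finset.mem_erase.mpr ⟨hj, Finset.mem_univ j⟩)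
    omega
  rcases Int.natAbs_eq_iff.mp hyi with hy1 | hy1
  · refine ⟨(i, true), funext fun j => ?_⟩
    by_cases hj : j = i
    · subst hj; simp [pt]; omega
    · rw [hrest j hj, pt, Pi.single_eq_of_ne hj]
  · refine ⟨(i, false), funext fun j => ?_⟩
    by_cases hj : j = i
    · subst hj; simp [pt]; omega
    · rw [hrest j hj, pt, Pi.single_eq_of_ne hj]

lemma tsum_support_pt (x : Fin d → ℤ) (f : (Fin d → ℤ) → ℝ)
    (hf : ∀ u, S (x - u) ≠ 1 → f u = 0) :
    ∑' u, f u = ∑ p : Fin d × Bool, f (x - pt d p) := by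
  have hinj : Function.Injective (fun p : Fin d × Bool => x - pt d p) :=
    fun p q h => pt_inj (sub_right_injective h)
  have hsupp : Function.support f ⊆ Set.range (fun p : Fin d × Bool => x - pt d p) := by
    intro u hu
    have hS : S (x - u) = 1 := by
      by_contra hS; exact hu (hf u hS)
    obtain ⟨p, hp⟩ := exists_pt hS
    exact ⟨p, by show x - pt d p = u; rw [← hp, sub_sub_cancel]⟩
  rw [← hinj.tsum_eq hsupp, tsum_fintype]

def cnt (u : Fin d → ℤ) : ℕ :=
  (Finset.univ.filter (fun p : Fin d × Bool => S (u - pt d p) = 1)).card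

lemma pair_tsum (a b : ℕ) (ha : a ≠ 0) (hb : b ≠ 0) (u : Fin d → ℤ) :
    ∑' y : Fin d → ℤ, nnD d y ^ a * nnD d (u - y) ^ b
      = (1 / (2 * (d : ℝ))) ^ (a + b) * cnt u := by
  have h0 : ∑' y : Fin d → ℤ, nnD d y ^ a * nnD d (u - y) ^ b
      = ∑' y : Fin d → ℤ, nnD d (u - y) ^ b * nnD d y ^ a :=
    tsum_congr fun y => mul_comm _ _
  rw [h0, tsum_support_pt u _ (fun y hy => by
    rw [nnD_eq (u - y), if_neg hy, zero_pow hb, zero_mul])]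
  have hterm : ∀ p : Fin d × Bool,
      nnD d (u - (u - pt d p)) ^ b * nnD d (u - pt d p) ^ a
        = if S (u - pt d p) = 1 then (1 / (2 * (d : ℝ))) ^ (a + b) else 0 := by
    intro p
    rw [sub_sub_cancel, nnD_eq (pt d p), S_pt, if_pos rfl, nnD_eq (u - pt d p)]
    by_cases h : S (u - pt d p) = 1
    · rw [if_pos h, if_pos h, ← pow_add, add_comm b a]
    · rw [if_neg h, if_neg h, zero_pow ha, mul_zero]
  rw [Finset.sum_congr rfl (fun p _ => hterm p), Finset.sum_ite, Finset.sum_const,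
    Finset.sum_const_zero, add_zero, nsmul_eq_mul, mul_comm]
  rfl

lemma conv_eq (u : Fin d → ℤ) :
    conv (nnD d) (nnD d) u = (1 / (2 * (d : ℝ))) ^ 2 * cnt u := by
  have := pair_tsum (d := d) 1 1 one_ne_zero one_ne_zero u
  simpa [conv, pow_one] using this




lemma S_sub_le (u v : Fin d → ℤ) : S u ≤ S (u - v) + S v := by
  unfold S
  rw [← Finset.sum_add_distrib]
  refine Finset.sum_le_sum fun i _ => ?_
  have h : u i = (u - v) i + v i := by simp
  rw [h]
  exact Int.natAbs_add_le _ _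

lemma cnt_eq_zero (u : Fin d → ℤ) (h : 3 ≤ S u) : cnt u = 0 := by
  rw [cnt, Finset.card_eq_zero, Finset.filter_eq_empty_iff]
  intro p _ hS
  have h2 := S_sub_le u (pt d p)
  rw [hS, S_pt] at h2
  omega

lemma S_neg (u : Fin d → ℤ) : S (-u) = S u := by
  unfold S
  exact Finset.sum_congr rfl fun i _ => by simp

lemma cnt_zero : cnt (0 : Fin d → ℤ) = 2 * d := by
  have hall : ∀ p : Fin d × Bool, S ((0 : Fin d → ℤ) - pt d p) = 1 := fun p => by
    rw [zero_sub, S_neg, S_pt]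
  rw [cnt, Finset.filter_true_of_mem (fun p _ => hall p), Finset.card_univ]
  simp [Fintype.card_prod]
  omega

lemma S_sub_pt (u : Fin d → ℤ) (k : Fin d) (c : Bool) :
    S (u - pt d (k, c)) = (u k - if c then 1 else -1).natAbs + (S u - (u k).natAbs) :=
  S_sub_single u k _

lemma cnt_double (i : Fin d) (σ : ℤ) (hσ : σ = 1 ∨ σ = -1) :
    cnt (Pi.single i (2 * σ)) = 1 := by
  have hS2 : S (Pi.single i (2 * σ)) = 2 := by
    rw [S_single]; rcases hσ with rfl | rfl <;> rfl
  have happ : ∀ k : Fin d, (Pi.single i (2 * σ) : Fin d → ℤ) k = if k = i then 2 * σ else 0 :=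
    fun k => by rw [Pi.single_apply]
  have hfil : (Finset.univ.filter
      (fun p : Fin d × Bool => S (Pi.single i (2 * σ) - pt d p) = 1))
      = {(i, decide (σ = 1))} := by
    ext ⟨k, c⟩
    simp only [Finset.mem_filter, Finset.mem_univ, true_and, Finset.mem_singleton,
      Prod.mk.injEq]
    rw [S_sub_pt, hS2, happ k]
    by_cases hk : k = i
    · subst hk
      rw [if_pos rfl]
      rcases hσ with rfl | rfl <;> cases c <;> simp
    · rw [if_neg hk]
      rcases hσ with rfl | rfl <;> cases c <;> simp [hk] <;> omega
  rw [cnt, hfil, Finset.card_singleton]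

lemma cnt_pair (i j : Fin d) (hij : i ≠ j) (σ τ : ℤ)
    (hσ : σ = 1 ∨ σ = -1) (hτ : τ = 1 ∨ τ = -1) :
    cnt (Pi.single i σ + Pi.single j τ) = 2 := by
  set u : Fin d → ℤ := Pi.single i σ + Pi.single j τ with hu
  have hji : (Pi.single i σ : Fin d → ℤ) j = 0 := Pi.single_eq_of_ne (Ne.symm hij) _
  have hS2 : S u = 2 := by
    rw [hu, S_add_single _ _ _ hji, S_single]
    rcases hσ with rfl | rfl <;> rcases hτ with rfl | rfl <;> rfl
  have hui : u i = σ := by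
    rw [hu, Pi.add_apply, Pi.single_eq_same, Pi.single_eq_of_ne hij, add_zero]
  have huj : u j = τ := by
    rw [hu, Pi.add_apply, Pi.single_eq_same, Pi.single_eq_of_ne (Ne.symm hij), zero_add]
  have huk : ∀ k, k ≠ i → k ≠ j → u k = 0 := fun k h1 h2 => by
    rw [hu, Pi.add_apply, Pi.single_eq_of_ne h1, Pi.single_eq_of_ne h2, add_zero]
  have hfil : (Finset.univ.filter (fun p : Fin d × Bool => S (u - pt d p) = 1))
      = {(i, decide (σ = 1)), (j, decide (τ = 1))} := by
    ext ⟨k, c⟩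
    simp only [Finset.mem_filter, Finset.mem_univ, true_and, Finset.mem_insert,
      Finset.mem_singleton, Prod.mk.injEq]
    rw [S_sub_pt, hS2]
    by_cases hk : k = i
    · subst hk
      rw [hui]
      have : ¬ (k = j) := hij
      rcases hσ with rfl | rfl <;> cases c <;> simp [hij] <;> omega
    · by_cases hk2 : k = j
      · subst hk2
        rw [huj]
        rcases hτ with rfl | rfl <;> cases c <;> simp [hk] <;> omega
      · rw [huk k hk hk2]
        cases c <;> simp [hk, hk2] <;> omega
  rw [cnt, hfil]
  exact Finset.card_pair (by simp [hij])



lemma eta1_eq (l m n r : ℕ) (hm : m ≠ 0) (hn : n ≠ 0) (hr : r ≠ 0) (x : Fin d → ℤ) :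
    eta1 d l m n r x
      = (1 / (2 * (d : ℝ))) ^ (2 * l + m + n + r) *
          ∑ p : Fin d × Bool, ((cnt (x - pt d p) : ℝ)) ^ (l + 1) := by
  unfold eta1
  have hvan : ∀ u : Fin d → ℤ, S (x - u) ≠ 1 →
      (conv (nnD d) (nnD d) u) ^ l * nnD d (x - u) ^ m *
        (∑' s' : Fin d → ℤ, nnD d s' ^ n * nnD d (u - s') ^ r) = 0 := by
    intro u hu
    rw [nnD_eq (x - u), if_neg hu, zero_pow hm, mul_zero, zero_mul]
  rw [tsum_support_pt x _ hvan, Finset.mul_sum]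
  refine Finset.sum_congr rfl fun p _ => ?_
  rw [conv_eq, pair_tsum n r hn hr, sub_sub_cancel, nnD_eq (pt d p), S_pt, if_pos rfl]
  rw [mul_pow, ← pow_mul]
  ring

lemma sum_ite_const (hd : 1 ≤ d) (i : Fin d) (A B : ℝ) :
    ∑ j : Fin d, (if j = i then A else B) = A + ((d : ℝ) - 1) * B := by
  rw [← Finset.add_sum_erase _ _ (Finset.mem_univ i), if_pos rfl]
  congr 1
  rw [Finset.sum_congr rfl (fun j hj => if_neg (Finset.ne_of_mem_erase hj)),
    Finset.sum_const, Finset.card_erase_of_mem (Finset.mem_univ i), Finset.card_univ,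
    Fintype.card_fin, nsmul_eq_mul, Nat.cast_sub hd]
  norm_num

lemma sum_ite_two (i0 i1 : Fin d) (h01 : i0 ≠ i1) (A B : ℝ) :
    ∑ j : Fin d, (if j = i0 then A else if j = i1 then B else 0) = A + B := by
  rw [← Finset.add_sum_erase _ _ (Finset.mem_univ i0), if_pos rfl]
  congr 1
  rw [Finset.sum_congr rfl (fun j hj => if_neg (Finset.ne_of_mem_erase hj)),
    Finset.sum_ite_eq' _ i1 (fun _ => B),
    if_pos (Finset.mem_erase.mpr ⟨Ne.symm h01, Finset.mem_univ i1⟩)]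

lemma sum_ite_three (i0 i1 i2 : Fin d) (h01 : i0 ≠ i1) (h02 : i0 ≠ i2) (h12 : i1 ≠ i2)
    (A : ℝ) :
    ∑ j : Fin d, (if j = i0 ∨ j = i1 ∨ j = i2 then A else 0) = 3 * A := by
  have hmem : ∀ j : Fin d, (j = i0 ∨ j = i1 ∨ j = i2) ↔ j ∈ ({i0, i1, i2} : Finset (Fin d)) := by
    intro j; simp
  rw [Finset.sum_congr rfl (fun j _ => by rw [if_congr (hmem j) rfl rfl]),
    Finset.sum_ite_mem, Finset.univ_inter, Finset.sum_const]
  rw [show ({i0, i1, i2} : Finset (Fin d)).card = 3 by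
    rw [Finset.card_insert_of_notMem (by simp [h01, h02]),
      Finset.card_insert_of_notMem (by simp [h12]), Finset.card_singleton]]
  rw [nsmul_eq_mul]
  norm_num

lemma eta1_val1 (l m n r : ℕ) (hd : 3 ≤ d) (hl : 1 ≤ l) (hm : 1 ≤ m) (hn : 1 ≤ n)
    (hr : 1 ≤ r) (i0 : Fin d) :
    eta1 d l m n r (Pi.single i0 1)
      = (1 / (2 * (d : ℝ))) ^ (l + m + n + r - 1) *
          (1 + 2 ^ (l + 1) * (1 / (2 * (d : ℝ))) ^ l
            - (2 ^ (l + 2) - 1) * (1 / (2 * (d : ℝ))) ^ (l + 1)) := by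
  have hd0 : (0 : ℝ) < (d : ℝ) := by exact_mod_cast (by omega : 0 < d)
  rw [eta1_eq l m n r (by omega) (by omega) (by omega), Fintype.sum_prod_type]
  have hcnt : ∀ (j : Fin d) (b : Bool),
      cnt ((Pi.single i0 1 : Fin d → ℤ) - pt d (j, b))
        = if j = i0 then (if b then 2 * d else 1) else 2 := by
    intro j b
    by_cases hj : j = i0
    · rw [if_pos hj, ← hj]
      cases b
      · have hv : (Pi.single j 1 : Fin d → ℤ) - pt d (j, false) = Pi.single j (2 * 1) := by
          show (Pi.single j 1 : Fin d → ℤ) - Pi.single j (-1) = _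
          rw [← Pi.single_sub]; norm_num
        rw [hv, cnt_double j 1 (Or.inl rfl)]
        simp
      · have hv : (Pi.single j 1 : Fin d → ℤ) - pt d (j, true) = 0 := sub_self _
        rw [hv, cnt_zero]
        simp
    · have hv : (Pi.single i0 1 : Fin d → ℤ) - pt d (j, b)
          = Pi.single i0 1 + Pi.single j (-(if b then 1 else -1)) := by
        show (Pi.single i0 1 : Fin d → ℤ) - Pi.single j (if b then 1 else -1) = _
        rw [Pi.single_neg, sub_eq_add_neg]
      rw [if_neg hj, hv, cnt_pair i0 j (Ne.symm hj) 1 _ (Or.inl rfl)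
        (by cases b <;> simp)]
  have hsum : ∑ j : Fin d, ∑ b : Bool,
      ((cnt ((Pi.single i0 1 : Fin d → ℤ) - pt d (j, b)) : ℝ)) ^ (l + 1)
      = (2 * (d : ℝ)) ^ (l + 1) + 1 + ((d : ℝ) - 1) * (2 * (2 : ℝ) ^ (l + 1)) := by
    have hin : ∀ j : Fin d, ∑ b : Bool,
        ((cnt ((Pi.single i0 1 : Fin d → ℤ) - pt d (j, b)) : ℝ)) ^ (l + 1)
        = if j = i0 then (2 * (d : ℝ)) ^ (l + 1) + 1 else 2 * (2 : ℝ) ^ (l + 1) := by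
      intro j
      rw [Fintype.sum_bool, hcnt j true, hcnt j false]
      by_cases hj : j = i0
      · rw [if_pos hj, if_pos hj, if_pos hj, if_pos rfl]
        push_cast
        norm_num
      · rw [if_neg hj, if_neg hj, if_neg hj]
        push_cast
        ring
    rw [Finset.sum_congr rfl (fun j _ => hin j), sum_ite_const (by omega) i0]
  rw [hsum]
  obtain ⟨l', rfl⟩ : ∃ l', l = l' + 1 := ⟨l - 1, by omega⟩
  obtain ⟨m', rfl⟩ : ∃ m', m = m' + 1 := ⟨m - 1, by omega⟩
  obtain ⟨n', rfl⟩ : ∃ n', n = n' + 1 := ⟨n - 1, by omega⟩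
  obtain ⟨r', rfl⟩ : ∃ r', r = r' + 1 := ⟨r - 1, by omega⟩
  have hexp : l' + 1 + (m' + 1) + (n' + 1) + (r' + 1) - 1 = l' + m' + n' + r' + 3 := by omega
  rw [hexp]
  have h2d : (2 * (d : ℝ)) ≠ 0 := by positivity
  have hsd : (1 / (2 * (d : ℝ))) * (2 * (d : ℝ)) = 1 := by field_simp
  generalize 1 / (2 * (d : ℝ)) = s at hsd ⊢
  have hp : (s * (2 * (d : ℝ))) ^ (l' + 1 + 1) = 1 := by rw [hsd, one_pow]
  linear_combination s ^ (l' + m' + n' + r' + 3) * hp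
    + 2 ^ (l' + 1 + 1) * s ^ (2 * l' + m' + n' + r' + 4) * hsd



lemma eta1_val2 (l m n r : ℕ) (hd : 3 ≤ d) (hl : 1 ≤ l) (hm : 1 ≤ m) (hn : 1 ≤ n)
    (hr : 1 ≤ r) (i0 i1 : Fin d) (h01 : i0 ≠ i1) :
    eta1 d l m n r (Pi.single i0 2 + Pi.single i1 1)
      = (1 / (2 * (d : ℝ))) ^ (2 * l + m + n + r) * (1 + 2 ^ (l + 1)) := by
  rw [eta1_eq l m n r (by omega) (by omega) (by omega), Fintype.sum_prod_type]
  set x : Fin d → ℤ := Pi.single i0 2 + Pi.single i1 1 with hx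
  have hxj : ∀ j, j ≠ i0 → j ≠ i1 → x j = 0 := fun j h1 h2 => by
    rw [hx, Pi.add_apply, Pi.single_eq_of_ne h1, Pi.single_eq_of_ne h2, add_zero]
  have hSx : S x = 3 := by
    rw [hx, S_add_single _ _ _ (Pi.single_eq_of_ne (Ne.symm h01) _), S_single]
    decide
  have hcnt : ∀ (j : Fin d) (b : Bool),
      cnt (x - pt d (j, b))
        = if j = i0 then (if b then 2 else 0) else if j = i1 then (if b then 1 else 0)
          else 0 := by
    intro j b
    by_cases hj0 : j = i0
    · rw [if_pos hj0]
      cases b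
      · have hv : x - pt d (j, false) = Pi.single i0 3 + Pi.single i1 1 := by
          show x - Pi.single j (-1) = _
          rw [hx, hj0, show (3 : ℤ) = 2 - (-1) by norm_num]
          simp only [Pi.single_sub]
          abel
        rw [hv, cnt_eq_zero _ (by
          rw [S_add_single _ _ _ (Pi.single_eq_of_ne (Ne.symm h01) _), S_single]
          decide)]
        simp
      · have hv : x - pt d (j, true) = Pi.single i0 1 + Pi.single i1 1 := by
          show x - Pi.single j 1 = _
          rw [hx, hj0, show (2 : ℤ) = 1 + 1 by norm_num]
          simp only [Pi.single_add]
          abel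
        rw [hv, cnt_pair i0 i1 h01 1 1 (Or.inl rfl) (Or.inl rfl)]
        simp
    · rw [if_neg hj0]
      by_cases hj1 : j = i1
      · rw [if_pos hj1]
        cases b
        · have hv : x - pt d (j, false) = Pi.single i0 2 + Pi.single i1 2 := by
            show x - Pi.single j (-1) = _
            rw [hx, hj1, show (2 : ℤ) = 1 - (-1) by norm_num]
            simp only [Pi.single_sub]
            abel
          rw [hv, cnt_eq_zero _ (by
            rw [S_add_single _ _ _ (Pi.single_eq_of_ne (Ne.symm h01) _), S_single]
            decide)]
          simp
        · have hv : x - pt d (j, true) = Pi.single i0 (2 * 1) := by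
            show x - Pi.single j 1 = _
            rw [hx, hj1, show ((2 : ℤ) * 1) = 2 by norm_num]
            exact add_sub_cancel_right _ _
          rw [hv, cnt_double i0 1 (Or.inl rfl)]
          simp
      · rw [if_neg hj1]
        have hv : x - pt d (j, b) = x + Pi.single j (-(if b then 1 else -1)) := by
          show x - Pi.single j (if b then 1 else -1) = _
          rw [Pi.single_neg, sub_eq_add_neg]
        rw [hv, cnt_eq_zero _ (by
          rw [S_add_single _ _ _ (hxj j hj0 hj1), hSx]
          cases b <;> simp)]
  have hsum : ∑ j : Fin d, ∑ b : Bool, ((cnt (x - pt d (j, b)) : ℝ)) ^ (l + 1)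
      = (2 : ℝ) ^ (l + 1) + 1 := by
    have hin : ∀ j : Fin d, ∑ b : Bool, ((cnt (x - pt d (j, b)) : ℝ)) ^ (l + 1)
        = if j = i0 then (2 : ℝ) ^ (l + 1) else if j = i1 then 1 else 0 := by
      intro j
      rw [Fintype.sum_bool, hcnt j true, hcnt j false]
      by_cases hj0 : j = i0
      · rw [if_pos hj0, if_pos hj0, if_pos hj0]
        push_cast
        rw [zero_pow (by omega : l + 1 ≠ 0)]
        norm_num
      · rw [if_neg hj0, if_neg hj0, if_neg hj0]
        by_cases hj1 : j = i1
        · rw [if_pos hj1, if_pos hj1, if_pos hj1]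
          push_cast
          rw [zero_pow (by omega : l + 1 ≠ 0)]
          norm_num
        · rw [if_neg hj1, if_neg hj1, if_neg hj1]
          push_cast
          rw [zero_pow (by omega : l + 1 ≠ 0)]
          norm_num
    rw [Finset.sum_congr rfl (fun j _ => hin j), sum_ite_two i0 i1 h01]
  rw [hsum]
  ring

lemma eta1_val3 (l m n r : ℕ) (hd : 3 ≤ d) (hl : 1 ≤ l) (hm : 1 ≤ m) (hn : 1 ≤ n)
    (hr : 1 ≤ r) (i0 i1 i2 : Fin d) (h01 : i0 ≠ i1) (h02 : i0 ≠ i2) (h12 : i1 ≠ i2) :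
    eta1 d l m n r (Pi.single i0 1 + Pi.single i1 1 + Pi.single i2 1)
      = 3 * 2 ^ (l + 1) * (1 / (2 * (d : ℝ))) ^ (2 * l + m + n + r) := by
  rw [eta1_eq l m n r (by omega) (by omega) (by omega), Fintype.sum_prod_type]
  set x : Fin d → ℤ := Pi.single i0 1 + Pi.single i1 1 + Pi.single i2 1 with hx
  have hxj : ∀ j, j ≠ i0 → j ≠ i1 → j ≠ i2 → x j = 0 := fun j h1 h2 h3 => by
    rw [hx, Pi.add_apply, Pi.add_apply, Pi.single_eq_of_ne h1, Pi.single_eq_of_ne h2,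
      Pi.single_eq_of_ne h3, add_zero, add_zero]
  have hz2 : (Pi.single i0 (1:ℤ) + Pi.single i1 1 : Fin d → ℤ) i2 = 0 := by
    rw [Pi.add_apply, Pi.single_eq_of_ne (Ne.symm h02), Pi.single_eq_of_ne (Ne.symm h12),
      add_zero]
  have hS01 : S (Pi.single i0 1 + Pi.single i1 1 : Fin d → ℤ) = 2 := by
    rw [S_add_single _ _ _ (Pi.single_eq_of_ne (Ne.symm h01) _), S_single]
    decide
  have hSx : S x = 3 := by
    rw [hx, S_add_single _ _ _ hz2, hS01]
    decide
  have hcnt : ∀ (j : Fin d) (b : Bool),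
      cnt (x - pt d (j, b))
        = if j = i0 ∨ j = i1 ∨ j = i2 then (if b then 2 else 0) else 0 := by
    intro j b
    by_cases hj : j = i0 ∨ j = i1 ∨ j = i2
    · rw [if_pos hj]
      cases b
      · have hv : x - pt d (j, false) = x + Pi.single j 1 := by
          show x - Pi.single j (-1) = _
          rw [show (Pi.single j (1:ℤ) : Fin d → ℤ) = -Pi.single j (-1) by
            rw [← Pi.single_neg]; norm_num, sub_eq_add_neg]
        have h4 : S (x + Pi.single j 1) = 4 := by
          rcases hj with hj | hj | hj
          · have hxx : x + Pi.single j 1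
                = Pi.single i0 2 + Pi.single i1 1 + Pi.single i2 1 := by
              rw [hx, hj, show (2:ℤ) = 1 + 1 by norm_num]
              simp only [Pi.single_add]
              abel
            have hz2' : (Pi.single i0 (2:ℤ) + Pi.single i1 1 : Fin d → ℤ) i2 = 0 := by
              rw [Pi.add_apply, Pi.single_eq_of_ne (Ne.symm h02),
                Pi.single_eq_of_ne (Ne.symm h12), add_zero]
            rw [hxx, S_add_single _ _ _ hz2',
              S_add_single _ _ _ (Pi.single_eq_of_ne (Ne.symm h01) _), S_single]
            decide
          · have hxx : x + Pi.single j 1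
                = Pi.single i0 1 + Pi.single i1 2 + Pi.single i2 1 := by
              rw [hx, hj, show (2:ℤ) = 1 + 1 by norm_num]
              simp only [Pi.single_add]
              abel
            have hz2' : (Pi.single i0 (1:ℤ) + Pi.single i1 2 : Fin d → ℤ) i2 = 0 := by
              rw [Pi.add_apply, Pi.single_eq_of_ne (Ne.symm h02),
                Pi.single_eq_of_ne (Ne.symm h12), add_zero]
            rw [hxx, S_add_single _ _ _ hz2',
              S_add_single _ _ _ (Pi.single_eq_of_ne (Ne.symm h01) _), S_single]
            decide
          · have hxx : x + Pi.single j 1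
                = Pi.single i0 1 + Pi.single i1 1 + Pi.single i2 2 := by
              rw [hx, hj, show (2:ℤ) = 1 + 1 by norm_num]
              simp only [Pi.single_add]
              abel
            rw [hxx, S_add_single _ _ _ hz2, hS01]
            decide
        rw [hv, cnt_eq_zero _ (by omega)]
        simp
      · rcases hj with hj | hj | hj
        · have hv : x - pt d (j, true) = Pi.single i1 1 + Pi.single i2 1 := by
            show x - Pi.single j 1 = _
            rw [hx, hj]; abel
          rw [hv, cnt_pair i1 i2 h12 1 1 (Or.inl rfl) (Or.inl rfl)]
          simp
        · have hv : x - pt d (j, true) = Pi.single i0 1 + Pi.single i2 1 := by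
            show x - Pi.single j 1 = _
            rw [hx, hj]; abel
          rw [hv, cnt_pair i0 i2 h02 1 1 (Or.inl rfl) (Or.inl rfl)]
          simp
        · have hv : x - pt d (j, true) = Pi.single i0 1 + Pi.single i1 1 := by
            show x - Pi.single j 1 = _
            rw [hx, hj]; abel
          rw [hv, cnt_pair i0 i1 h01 1 1 (Or.inl rfl) (Or.inl rfl)]
          simp
    · rw [if_neg hj]
      push_neg at hj
      have hv : x - pt d (j, b) = x + Pi.single j (-(if b then 1 else -1)) := by
        show x - Pi.single j (if b then 1 else -1) = _
        rw [Pi.single_neg, sub_eq_add_neg]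
      rw [hv, cnt_eq_zero _ (by
        rw [S_add_single _ _ _ (hxj j hj.1 hj.2.1 hj.2.2), hSx]
        cases b <;> simp)]
  have hsum : ∑ j : Fin d, ∑ b : Bool, ((cnt (x - pt d (j, b)) : ℝ)) ^ (l + 1)
      = 3 * (2 : ℝ) ^ (l + 1) := by
    have hin : ∀ j : Fin d, ∑ b : Bool, ((cnt (x - pt d (j, b)) : ℝ)) ^ (l + 1)
        = if j = i0 ∨ j = i1 ∨ j = i2 then (2 : ℝ) ^ (l + 1) else 0 := by
      intro j
      rw [Fintype.sum_bool, hcnt j true, hcnt j false]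
      by_cases hj : j = i0 ∨ j = i1 ∨ j = i2
      · rw [if_pos hj, if_pos hj, if_pos hj]
        push_cast
        rw [zero_pow (by omega : l + 1 ≠ 0)]
        norm_num
      · rw [if_neg hj, if_neg hj, if_neg hj]
        push_cast
        rw [zero_pow (by omega : l + 1 ≠ 0)]
        norm_num
    rw [Finset.sum_congr rfl (fun j _ => hin j), sum_ite_three i0 i1 i2 h01 h02 h12]
  rw [hsum]
  ring


end Eta1Aux

/-- Values of `η₁[l,m,n,r]` at `e₁`, `2e₁+e₂` and `e₁+e₂+e₃`, with `s = 1/(2d)`. -/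
theorem eta1_values (d l m n r : ℕ) (hd : 3 ≤ d)
    (hl : 1 ≤ l) (hm : 1 ≤ m) (hn : 1 ≤ n) (hr : 1 ≤ r) :
    eta1 d l m n r (Pi.single (⟨0, by omega⟩ : Fin d) 1)
      = (1 / (2 * (d : ℝ))) ^ (l + m + n + r - 1) *
          (1 + 2 ^ (l + 1) * (1 / (2 * (d : ℝ))) ^ l
            - (2 ^ (l + 2) - 1) * (1 / (2 * (d : ℝ))) ^ (l + 1)) ∧
    eta1 d l m n r (Pi.single (⟨0, by omega⟩ : Fin d) 2 + Pi.single (⟨1, by omega⟩ : Fin d) 1)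
      = (1 / (2 * (d : ℝ))) ^ (2 * l + m + n + r) * (1 + 2 ^ (l + 1)) ∧
    eta1 d l m n r (Pi.single (⟨0, by omega⟩ : Fin d) 1 + Pi.single (⟨1, by omega⟩ : Fin d) 1
        + Pi.single (⟨2, by omega⟩ : Fin d) 1)
      = 3 * 2 ^ (l + 1) * (1 / (2 * (d : ℝ))) ^ (2 * l + m + n + r) := by
  exact ⟨Eta1Aux.eta1_val1 l m n r hd hl hm hn hr _,
    Eta1Aux.eta1_val2 l m n r hd hl hm hn hr _ _
      (Fin.ne_of_val_ne (by norm_num)),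
    Eta1Aux.eta1_val3 l m n r hd hl hm hn hr _ _ _
      (Fin.ne_of_val_ne (by norm_num)) (Fin.ne_of_val_ne (by norm_num))
      (Fin.ne_of_val_ne (by norm_num))⟩
end

section
/- Let s = 1/(2d), d ≥ 3, and for integer l ≥ 1 define η₃[l](x) = Σ_{s', u} D(s')² D(u-s')^l D(x-u)², sums over lattice points s', u ∈ Z^d with D the nearest-neighbor step distribution. Then η₃[l](e_1) = 3 s^{l+3}(1-s), η₃[l](2e_1+e_2) = 3 s^{l+4}, and η₃[l](e_1+e_2+e_3) = 6 s^{l+4}. -/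
open scoped BigOperators

/-- `η₃[l](x) = ∑_{s',u} D(s')² D(u-s')^l D(x-u)²`. -/
noncomputable def eta3 (d l : ℕ) (x : Fin d → ℤ) : ℝ :=
  ∑' s' : Fin d → ℤ, ∑' u : Fin d → ℤ,
    nnD d s' ^ 2 * nnD d (u - s') ^ l * nnD d (x - u) ^ 2

namespace Eta3Aux

variable {d : ℕ}

def uvec (d : ℕ) (p : Fin d × Bool) : Fin d → ℤ :=
  Pi.single p.1 (if p.2 then 1 else -1)

lemma uvec_eq (i : Fin d) (b : Bool) :
    uvec d (i, b) = Pi.single i (if b then 1 else -1) := rfl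

lemma uvec_true (i : Fin d) : uvec d (i, true) = Pi.single i 1 := by simp [uvec]

lemma uvec_false (i : Fin d) : uvec d (i, false) = Pi.single i (-1) := by simp [uvec]

lemma sumAbs_single (i : Fin d) (c : ℤ) :
    ∑ k, ((Pi.single i c : Fin d → ℤ) k).natAbs = c.natAbs := by
  have h1 : ∀ k, ((Pi.single i c : Fin d → ℤ) k).natAbs
      = if k = i then c.natAbs else 0 := by
    intro k
    by_cases hk : k = i
    · subst hk; simp
    · simp [Pi.single_eq_of_ne hk, hk]
  simp [h1]

lemma sumAbs_add_single (a : Fin d) (x : ℤ) (f : Fin d → ℤ) (h : f a = 0) :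
    ∑ k, (((Pi.single a x : Fin d → ℤ) + f) k).natAbs
      = x.natAbs + ∑ k, (f k).natAbs := by
  have h1 : ∀ k, (((Pi.single a x : Fin d → ℤ) + f) k).natAbs
      = (if k = a then x.natAbs else 0) + (f k).natAbs := by
    intro k
    by_cases hk : k = a
    · subst hk; simp [h]
    · simp [Pi.single_eq_of_ne hk, hk]
  rw [Finset.sum_congr rfl (fun k _ => h1 k), Finset.sum_add_distrib]
  simp

lemma sumAbs_uvec (p : Fin d × Bool) : ∑ k, (uvec d p k).natAbs = 1 := by
  obtain ⟨i, b⟩ := p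
  cases b <;> simp [uvec, sumAbs_single]

lemma uvec_apply_self (p : Fin d × Bool) : uvec d p p.1 = if p.2 then 1 else -1 := by
  simp [uvec]

lemma uvec_injective : Function.Injective (uvec d) := by
  rintro ⟨i, a⟩ ⟨j, b⟩ h
  have hi := congrFun h i
  by_cases hij : i = j
  · subst hij
    have hv := congrFun h i
    rw [uvec_apply_self (p := (i,a)), show uvec d (i,b) i = if b then 1 else -1 from
      uvec_apply_self (p := (i,b))] at hv
    cases a <;> cases b <;> simp_all
  · exfalso
    rw [uvec_apply_self (p := (i,a))] at hi
    have : uvec d (j, b) i = 0 := Pi.single_eq_of_ne hij _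
    rw [this] at hi
    cases a <;> simp_all

lemma sumAbs_pair {a b : Fin d} (hab : a ≠ b) (x y : ℤ) :
    ∑ k, ((Pi.single a x + Pi.single b y : Fin d → ℤ) k).natAbs
      = x.natAbs + y.natAbs := by
  rw [sumAbs_add_single a x _ (Pi.single_eq_of_ne hab _), sumAbs_single]

lemma sumAbs_triple {a b c : Fin d} (hab : a ≠ b) (hac : a ≠ c) (hbc : b ≠ c)
    (x y z : ℤ) :
    ∑ k, ((Pi.single a x + Pi.single b y + Pi.single c z : Fin d → ℤ) k).natAbs
      = x.natAbs + y.natAbs + z.natAbs := by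
  rw [add_assoc, sumAbs_add_single a x _ (by
    simp [Pi.single_eq_of_ne hab, Pi.single_eq_of_ne hac]),
    sumAbs_pair hbc, add_assoc]

lemma sumAbs_quad {a b c e : Fin d} (hab : a ≠ b) (hac : a ≠ c) (hae : a ≠ e)
    (hbc : b ≠ c) (hbe : b ≠ e) (hce : c ≠ e) (x y z w : ℤ) :
    ∑ k, ((Pi.single a x + Pi.single b y + Pi.single c z + Pi.single e w :
      Fin d → ℤ) k).natAbs
      = x.natAbs + y.natAbs + z.natAbs + w.natAbs := by
  have hassoc : (Pi.single a x + Pi.single b y + Pi.single c z + Pi.single e w :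
      Fin d → ℤ) = Pi.single a x
        + (Pi.single b y + Pi.single c z + Pi.single e w) := by abel
  rw [hassoc, sumAbs_add_single a x _ (by
    simp [Pi.single_eq_of_ne hab, Pi.single_eq_of_ne hac, Pi.single_eq_of_ne hae]),
    sumAbs_triple hbc hbe hce]
  ring

lemma exists_uvec_of_sumAbs {y : Fin d → ℤ} (h : ∑ k, (y k).natAbs = 1) :
    ∃ p : Fin d × Bool, y = uvec d p := by
  obtain ⟨i, -, hi⟩ := Finset.exists_ne_zero_of_sum_ne_zero
    (by rw [h]; exact one_ne_zero : ∑ k : Fin d, (y k).natAbs ≠ 0)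
  have hle : (y i).natAbs ≤ 1 :=
    h ▸ Finset.single_le_sum (f := fun k => (y k).natAbs)
      (fun j _ => Nat.zero_le _) (Finset.mem_univ i)
  have h1 : (y i).natAbs = 1 := by omega
  have hz : ∀ j, j ≠ i → y j = 0 := by
    intro j hj
    have h0 : ∑ k ∈ Finset.univ.erase i, (y k).natAbs = 0 := by
      have he : (y i).natAbs + ∑ k ∈ Finset.univ.erase i, (y k).natAbs
          = ∑ k, (y k).natAbs :=
        Finset.add_sum_erase Finset.univ (fun k => (y k).natAbs) (Finset.mem_univ i)
      omega
    have := Finset.sum_eq_zero_iff.mp h0 j (Finset.mem_erase.2 ⟨hj, Finset.mem_univ j⟩)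
    omega
  have hy : y = Pi.single i (y i) := by
    funext j
    by_cases hj : j = i
    · subst hj; simp
    · rw [Pi.single_eq_of_ne hj, hz j hj]
  rcases Int.natAbs_eq_iff.mp h1 with h2 | h2
  · exact ⟨(i, true), by rw [hy, h2]; simp [uvec]⟩
  · exact ⟨(i, false), by rw [hy, h2]; simp [uvec]⟩

lemma nnD_uvec (p : Fin d × Bool) : nnD d (uvec d p) = 1 / (2 * d) := by
  simp [nnD, sumAbs_uvec]

lemma nnD_eq_zero {y : Fin d → ℤ} (h : ∑ k, (y k).natAbs ≠ 1) : nnD d y = 0 := by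
  simp [nnD, h]

noncomputable def W2 (d : ℕ) (y : Fin d → ℤ) : ℝ :=
  ∑ q : Fin d × Bool, if (∑ k, ((y - uvec d q) k).natAbs) = 1 then (1:ℝ) else 0

lemma W2_zero : W2 d 0 = 2 * d := by
  have h1 : ∀ q : Fin d × Bool,
      (∑ k, (((0 : Fin d → ℤ) - uvec d q) k).natAbs) = 1 := by
    intro q
    have : ∀ k, (((0 : Fin d → ℤ) - uvec d q) k).natAbs = (uvec d q k).natAbs := by
      intro k; simp
    rw [Finset.sum_congr rfl (fun k _ => this k), sumAbs_uvec]
  simp only [W2, if_pos (h1 _)]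
  simp [Finset.card_univ]
  ring

lemma W2_big {y : Fin d → ℤ} (h : 4 ≤ ∑ k, (y k).natAbs) : W2 d y = 0 := by
  have h1 : ∀ q : Fin d × Bool, (∑ k, ((y - uvec d q) k).natAbs) ≠ 1 := by
    intro q hq
    have hle : ∑ k, (y k).natAbs
        ≤ (∑ k, ((y - uvec d q) k).natAbs) + ∑ k, (uvec d q k).natAbs := by
      rw [← Finset.sum_add_distrib]
      apply Finset.sum_le_sum
      intro k _
      have hrw : y k = (y k - uvec d q k) + uvec d q k := by ring
      calc (y k).natAbs = ((y k - uvec d q k) + uvec d q k).natAbs := by rw [← hrw]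
        _ ≤ (y k - uvec d q k).natAbs + (uvec d q k).natAbs := Int.natAbs_add_le _ _
        _ = ((y - uvec d q) k).natAbs + (uvec d q k).natAbs := rfl
    rw [hq, sumAbs_uvec] at hle
    omega
  simp only [W2, if_neg (h1 _)]
  simp

lemma sum_ind_one {α} [Fintype α] [DecidableEq α] (P : α → Prop) [DecidablePred P] (q₁ : α)
    (h : ∀ q, P q ↔ q = q₁) :
    ∑ q, (if P q then (1:ℝ) else 0) = 1 := by
  simp [h, Finset.sum_ite_eq']

lemma sum_ind_two {α} [Fintype α] [DecidableEq α] (P : α → Prop) [DecidablePred P] (q₁ q₂ : α)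
    (hne : q₁ ≠ q₂) (h : ∀ q, P q ↔ (q = q₁ ∨ q = q₂)) :
    ∑ q, (if P q then (1:ℝ) else 0) = 2 := by
  have key : ∀ q, (if P q then (1:ℝ) else 0)
      = (if q = q₁ then 1 else 0) + (if q = q₂ then 1 else 0) := by
    intro q
    by_cases h1 : q = q₁
    · subst h1; simp [h, hne]
    · by_cases h2 : q = q₂ <;> simp [h, h1, h2, Ne.symm hne]
  rw [Finset.sum_congr rfl (fun q _ => key q), Finset.sum_add_distrib]
  simp [Finset.sum_ite_eq']
  norm_num

lemma W2_single_two (a : Fin d) (x : ℤ) (hx : x.natAbs = 2) :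
    W2 d (Pi.single a x) = 1 := by
  apply sum_ind_one _ (a, decide (x = 2))
  rintro ⟨i, γ⟩
  by_cases hia : i = a
  · obtain rfl := hia
    have hv : (Pi.single i x : Fin d → ℤ) - uvec d (i, γ)
        = Pi.single i (x - (if γ then 1 else -1)) := by
      rw [uvec_eq, ← Pi.single_sub]
    rw [hv, sumAbs_single]
    rcases Int.natAbs_eq_iff.mp hx with h1 | h1 <;> subst h1 <;> cases γ <;>
      simp [Prod.ext_iff]
  · have hv : (Pi.single a x : Fin d → ℤ) - uvec d (i, γ)
        = Pi.single a x + Pi.single i (-(if γ then 1 else -1)) := by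
      rw [uvec_eq, Pi.single_neg]; abel
    rw [hv, sumAbs_pair (Ne.symm hia)]
    have hg : (-(if γ then (1:ℤ) else -1)).natAbs = 1 := by cases γ <;> decide
    rw [hg]
    simp [Prod.ext_iff, hia]
    omega

lemma W2_pair {a b : Fin d} (hab : a ≠ b) {x y : ℤ}
    (hx : x.natAbs = 1) (hy : y.natAbs = 1) :
    W2 d (Pi.single a x + Pi.single b y) = 2 := by
  apply sum_ind_two _ (a, decide (x = 1)) (b, decide (y = 1))
    (by simp [Prod.ext_iff]; intro h; exact absurd h hab)
  rintro ⟨i, γ⟩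
  by_cases hia : i = a
  · obtain rfl := hia
    have hv : (Pi.single i x + Pi.single b y : Fin d → ℤ) - uvec d (i, γ)
        = Pi.single i (x - (if γ then 1 else -1)) + Pi.single b y := by
      rw [uvec_eq, Pi.single_sub]; abel
    rw [hv, sumAbs_pair hab, hy]
    rcases Int.natAbs_eq_iff.mp hx with h1 | h1 <;> subst h1 <;> cases γ <;>
      simp [Prod.ext_iff, hab]
  · by_cases hib : i = b
    · obtain rfl := hib
      have hv : (Pi.single a x + Pi.single i y : Fin d → ℤ) - uvec d (i, γ)
          = Pi.single a x + Pi.single i (y - (if γ then 1 else -1)) := by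
        rw [uvec_eq, Pi.single_sub]; abel
      rw [hv, sumAbs_pair hab, hx]
      rcases Int.natAbs_eq_iff.mp hy with h1 | h1 <;> subst h1 <;> cases γ <;>
        simp [Prod.ext_iff, Ne.symm hab]
    · have hv : (Pi.single a x + Pi.single b y : Fin d → ℤ) - uvec d (i, γ)
          = Pi.single a x + Pi.single b y + Pi.single i (-(if γ then 1 else -1)) := by
        rw [uvec_eq, Pi.single_neg]; abel
      rw [hv, sumAbs_triple hab (Ne.symm hia) (Ne.symm hib), hx, hy]
      have hg : (-(if γ then (1:ℤ) else -1)).natAbs = 1 := by cases γ <;> decide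
      rw [hg]
      simp [Prod.ext_iff, hia, hib]

lemma eta3_eq (l : ℕ) (hl : 1 ≤ l) (x : Fin d → ℤ) :
    eta3 d l x
      = (1 / (2 * (d:ℝ))) ^ (l + 4) * ∑ p : Fin d × Bool, W2 d (x - uvec d p) := by
  have hinj : ∀ a ∈ (Finset.univ : Finset (Fin d × Bool)), ∀ b ∈ Finset.univ,
      uvec d a = uvec d b → a = b := fun a _ b _ h => uvec_injective h
  have step1 : eta3 d l x = ∑ p : Fin d × Bool,
      ∑' u : Fin d → ℤ,
        nnD d (uvec d p) ^ 2 * nnD d (u - uvec d p) ^ l * nnD d (x - u) ^ 2 := by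
    rw [eta3, tsum_eq_sum (s := Finset.image (uvec d) Finset.univ) ?h,
      Finset.sum_image hinj]
    case h =>
      intro s' hs'
      have h0 : nnD d s' = 0 := by
        rcases eq_or_ne (∑ k, (s' k).natAbs) 1 with h | h
        · obtain ⟨p, rfl⟩ := exists_uvec_of_sumAbs h
          exact absurd (Finset.mem_image_of_mem _ (Finset.mem_univ _)) hs'
        · exact nnD_eq_zero h
      simp [h0]
  have step2 : ∀ p : Fin d × Bool,
      (∑' u : Fin d → ℤ,
        nnD d (uvec d p) ^ 2 * nnD d (u - uvec d p) ^ l * nnD d (x - u) ^ 2)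
      = ∑ q : Fin d × Bool,
          nnD d (uvec d p) ^ 2 * nnD d (uvec d q) ^ l
            * nnD d (x - uvec d p - uvec d q) ^ 2 := by
    intro p
    have hinj2 : ∀ a ∈ (Finset.univ : Finset (Fin d × Bool)), ∀ b ∈ Finset.univ,
        uvec d p + uvec d a = uvec d p + uvec d b → a = b :=
      fun a _ b _ h => uvec_injective (add_left_cancel h)
    rw [tsum_eq_sum (s := Finset.image (fun q => uvec d p + uvec d q) Finset.univ) ?h2,
      Finset.sum_image hinj2]
    · apply Finset.sum_congr rfl
      intro q _
      rw [add_sub_cancel_left, sub_add_eq_sub_sub]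
    case h2 =>
      intro u hu
      have h0 : nnD d (u - uvec d p) = 0 := by
        rcases eq_or_ne (∑ k, ((u - uvec d p) k).natAbs) 1 with h | h
        · obtain ⟨q, hq⟩ := exists_uvec_of_sumAbs h
          exact absurd (Finset.mem_image.2 ⟨q, Finset.mem_univ _, by rw [← hq]; abel⟩) hu
        · exact nnD_eq_zero h
      rw [h0, zero_pow (by omega : l ≠ 0), mul_zero, zero_mul]
  rw [step1]
  rw [Finset.sum_congr rfl (fun p _ => step2 p)]
  have key : ∀ p q : Fin d × Bool,
      nnD d (uvec d p) ^ 2 * nnD d (uvec d q) ^ l * nnD d (x - uvec d p - uvec d q) ^ 2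
      = (1 / (2 * (d:ℝ))) ^ (l + 4)
          * (if (∑ k, ((x - uvec d p - uvec d q) k).natAbs) = 1 then (1:ℝ) else 0) := by
    intro p q
    rw [nnD_uvec, nnD_uvec]
    rcases eq_or_ne (∑ k, ((x - uvec d p - uvec d q) k).natAbs) 1 with h | h
    · rw [if_pos h]
      have h2 : nnD d (x - uvec d p - uvec d q) = 1 / (2 * (d:ℝ)) := by
        rw [nnD, if_pos h]
      rw [h2]; ring
    · rw [if_neg h, nnD_eq_zero h]; ring
  rw [Finset.sum_congr rfl (fun p _ => Finset.sum_congr rfl (fun q _ => key p q))]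
  simp only [W2, Finset.mul_sum]

lemma sum_ite_one_fin (a : Fin d) (A B : ℝ) :
    ∑ i : Fin d, (if i = a then A else B) = A + ((d:ℝ) - 1) * B := by
  have key : ∀ i : Fin d, (if i = a then A else B)
      = B + (if i = a then A - B else 0) := by
    intro i
    by_cases h : i = a
    · simp [h]
    · simp [h]
  rw [Finset.sum_congr rfl (fun i _ => key i), Finset.sum_add_distrib]
  simp [Finset.sum_ite_eq', Finset.card_univ]
  ring

lemma sum_ite_two_fin {a b : Fin d} (hab : a ≠ b) (A B : ℝ) :
    ∑ i : Fin d, (if i = a then A else if i = b then B else 0) = A + B := by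
  have key : ∀ i : Fin d, (if i = a then A else if i = b then B else 0)
      = (if i = a then A else 0) + (if i = b then B else 0) := by
    intro i
    by_cases h1 : i = a
    · subst h1; simp [hab]
    · by_cases h2 : i = b <;> simp [h1, h2, Ne.symm hab]
  rw [Finset.sum_congr rfl (fun i _ => key i), Finset.sum_add_distrib]
  simp [Finset.sum_ite_eq']

lemma sum_ite_three_fin {a b c : Fin d} (hab : a ≠ b) (hac : a ≠ c) (hbc : b ≠ c)
    (A B C : ℝ) :
    ∑ i : Fin d, (if i = a then A else if i = b then B else if i = c then C else 0)
      = A + B + C := by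
  have key : ∀ i : Fin d,
      (if i = a then A else if i = b then B else if i = c then C else 0)
      = (if i = a then A else 0) + (if i = b then B else 0)
        + (if i = c then C else 0) := by
    intro i
    by_cases h1 : i = a
    · subst h1; simp [hab, hac]
    · by_cases h2 : i = b
      · subst h2; simp [h1, hbc]
      · by_cases h3 : i = c <;> simp [h1, h2, h3, Ne.symm hac, Ne.symm hbc]
  rw [Finset.sum_congr rfl (fun i _ => key i), Finset.sum_add_distrib,
    Finset.sum_add_distrib]
  simp [Finset.sum_ite_eq']

lemma count_one (a : Fin d) :
    ∑ p : Fin d × Bool, W2 d (Pi.single a 1 - uvec d p) = 6 * (d:ℝ) - 3 := by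
  rw [Fintype.sum_prod_type]
  have key : ∀ i : Fin d, (∑ b : Bool, W2 d (Pi.single a 1 - uvec d (i, b)))
      = if i = a then 2 * (d:ℝ) + 1 else 4 := by
    intro i
    rw [Fintype.sum_bool]
    by_cases hia : i = a
    · obtain rfl := hia
      rw [if_pos rfl]
      have h1 : (Pi.single i 1 : Fin d → ℤ) - uvec d (i, true) = 0 := by
        rw [uvec_true]; abel
      have h2 : (Pi.single i 1 : Fin d → ℤ) - uvec d (i, false) = Pi.single i 2 := by
        rw [uvec_false, ← Pi.single_sub]; norm_num
      rw [h1, h2, W2_zero, W2_single_two i 2 (by decide)]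
    · rw [if_neg hia]
      have h1 : (Pi.single a 1 : Fin d → ℤ) - uvec d (i, true)
          = Pi.single a 1 + Pi.single i (-1) := by
        rw [uvec_true, Pi.single_neg]; abel
      have h2 : (Pi.single a 1 : Fin d → ℤ) - uvec d (i, false)
          = Pi.single a 1 + Pi.single i 1 := by
        rw [uvec_false]
        have : (Pi.single i (-1) : Fin d → ℤ) = -Pi.single i 1 := Pi.single_neg i 1
        rw [this]; abel
      rw [h1, h2, W2_pair (fun h => hia h.symm) (by decide) (by decide),
        W2_pair (fun h => hia h.symm) (by decide) (by decide)]
      norm_num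
  rw [Finset.sum_congr rfl (fun i _ => key i), sum_ite_one_fin]
  ring

lemma count_two {a b : Fin d} (hab : a ≠ b) :
    ∑ p : Fin d × Bool, W2 d (Pi.single a 2 + Pi.single b 1 - uvec d p) = 3 := by
  rw [Fintype.sum_prod_type]
  have h2a : (Pi.single a 2 : Fin d → ℤ) = Pi.single a 1 + Pi.single a 1 := by
    rw [← Pi.single_add]; norm_num
  have key : ∀ i : Fin d,
      (∑ g : Bool, W2 d (Pi.single a 2 + Pi.single b 1 - uvec d (i, g)))
      = if i = a then 2 else if i = b then 1 else 0 := by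
    intro i
    rw [Fintype.sum_bool]
    by_cases hia : i = a
    · obtain rfl := hia
      rw [if_pos rfl]
      have h1 : (Pi.single i 2 + Pi.single b 1 : Fin d → ℤ) - uvec d (i, true)
          = Pi.single i 1 + Pi.single b 1 := by
        rw [uvec_true, h2a]; abel
      have h2 : (Pi.single i 2 + Pi.single b 1 : Fin d → ℤ) - uvec d (i, false)
          = Pi.single i 3 + Pi.single b 1 := by
        rw [uvec_false]
        have h3 : (Pi.single i 3 : Fin d → ℤ) = Pi.single i 2 + Pi.single i 1 := by
          rw [← Pi.single_add]; norm_num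
        have hn : (Pi.single i (-1) : Fin d → ℤ) = -Pi.single i 1 := Pi.single_neg i 1
        rw [h3, hn]; abel
      rw [h1, h2, W2_pair hab (by decide) (by decide),
        W2_big (by rw [sumAbs_pair hab]; decide)]
      norm_num
    · rw [if_neg hia]
      by_cases hib : i = b
      · obtain rfl := hib
        rw [if_pos rfl]
        have h1 : (Pi.single a 2 + Pi.single i 1 : Fin d → ℤ) - uvec d (i, true)
            = Pi.single a 2 := by
          rw [uvec_true]; abel
        have h2 : (Pi.single a 2 + Pi.single i 1 : Fin d → ℤ) - uvec d (i, false)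
            = Pi.single a 2 + Pi.single i 2 := by
          rw [uvec_false]
          have h3 : (Pi.single i 2 : Fin d → ℤ) = Pi.single i 1 + Pi.single i 1 := by
            rw [← Pi.single_add]; norm_num
          have hn : (Pi.single i (-1) : Fin d → ℤ) = -Pi.single i 1 := Pi.single_neg i 1
          rw [h3, hn]; abel
        rw [h1, h2, W2_single_two a 2 (by decide),
          W2_big (by rw [sumAbs_pair hab]; decide)]
        norm_num
      · rw [if_neg hib]
        have hv : ∀ g : Bool,
            (Pi.single a 2 + Pi.single b 1 : Fin d → ℤ) - uvec d (i, g)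
            = Pi.single a 2 + Pi.single b 1 + Pi.single i (-(if g then 1 else -1)) := by
          intro g
          rw [uvec_eq, Pi.single_neg]; abel
        have hg : ∀ g : Bool, (-(if g then (1:ℤ) else -1)).natAbs = 1 := by
          intro g; cases g <;> decide
        rw [hv true, hv false,
          W2_big (by rw [sumAbs_triple hab (Ne.symm hia) (Ne.symm hib), hg true]; decide),
          W2_big (by rw [sumAbs_triple hab (Ne.symm hia) (Ne.symm hib), hg false]; decide)]
        norm_num
  rw [Finset.sum_congr rfl (fun i _ => key i), sum_ite_two_fin hab]
  norm_num

lemma count_three {a b c : Fin d} (hab : a ≠ b) (hac : a ≠ c) (hbc : b ≠ c) :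
    ∑ p : Fin d × Bool,
      W2 d (Pi.single a 1 + Pi.single b 1 + Pi.single c 1 - uvec d p) = 6 := by
  rw [Fintype.sum_prod_type]
  have key : ∀ i : Fin d,
      (∑ g : Bool, W2 d (Pi.single a 1 + Pi.single b 1 + Pi.single c 1 - uvec d (i, g)))
      = if i = a then 2 else if i = b then 2 else if i = c then 2 else 0 := by
    intro i
    rw [Fintype.sum_bool]
    have hsplit : ∀ j : Fin d, (Pi.single j 2 : Fin d → ℤ)
        = Pi.single j 1 + Pi.single j 1 := by
      intro j; rw [← Pi.single_add]; norm_num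
    have hneg : ∀ j : Fin d, (Pi.single j (-1) : Fin d → ℤ) = -Pi.single j 1 :=
      fun j => Pi.single_neg j 1
    by_cases hia : i = a
    · obtain rfl := hia
      rw [if_pos rfl]
      have h1 : (Pi.single i 1 + Pi.single b 1 + Pi.single c 1 : Fin d → ℤ)
          - uvec d (i, true) = Pi.single b 1 + Pi.single c 1 := by
        rw [uvec_true]; abel
      have h2 : (Pi.single i 1 + Pi.single b 1 + Pi.single c 1 : Fin d → ℤ)
          - uvec d (i, false) = Pi.single i 2 + Pi.single b 1 + Pi.single c 1 := by
        rw [uvec_false, hsplit i, hneg i]; abel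
      rw [h1, h2, W2_pair hbc (by decide) (by decide),
        W2_big (by rw [sumAbs_triple hab hac hbc]; decide)]
      norm_num
    · rw [if_neg hia]
      by_cases hib : i = b
      · obtain rfl := hib
        rw [if_pos rfl]
        have h1 : (Pi.single a 1 + Pi.single i 1 + Pi.single c 1 : Fin d → ℤ)
            - uvec d (i, true) = Pi.single a 1 + Pi.single c 1 := by
          rw [uvec_true]; abel
        have h2 : (Pi.single a 1 + Pi.single i 1 + Pi.single c 1 : Fin d → ℤ)
            - uvec d (i, false) = Pi.single a 1 + Pi.single i 2 + Pi.single c 1 := by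
          rw [uvec_false, hsplit i, hneg i]; abel
        rw [h1, h2, W2_pair hac (by decide) (by decide),
          W2_big (by rw [sumAbs_triple hab hac hbc]; decide)]
        norm_num
      · rw [if_neg hib]
        by_cases hic : i = c
        · obtain rfl := hic
          rw [if_pos rfl]
          have h1 : (Pi.single a 1 + Pi.single b 1 + Pi.single i 1 : Fin d → ℤ)
              - uvec d (i, true) = Pi.single a 1 + Pi.single b 1 := by
            rw [uvec_true]; abel
          have h2 : (Pi.single a 1 + Pi.single b 1 + Pi.single i 1 : Fin d → ℤ)
              - uvec d (i, false) = Pi.single a 1 + Pi.single b 1 + Pi.single i 2 := by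
            rw [uvec_false, hsplit i, hneg i]; abel
          rw [h1, h2, W2_pair hab (by decide) (by decide),
            W2_big (by rw [sumAbs_triple hab hac hbc]; decide)]
          norm_num
        · rw [if_neg hic]
          have hv : ∀ g : Bool,
              (Pi.single a 1 + Pi.single b 1 + Pi.single c 1 : Fin d → ℤ) - uvec d (i, g)
              = Pi.single a 1 + Pi.single b 1 + Pi.single c 1
                + Pi.single i (-(if g then 1 else -1)) := by
            intro g
            rw [uvec_eq, Pi.single_neg]; abel
          have hg : ∀ g : Bool, (-(if g then (1:ℤ) else -1)).natAbs = 1 := by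
            intro g; cases g <;> decide
          rw [hv true, hv false,
            W2_big (by rw [sumAbs_quad hab hac (Ne.symm hia) hbc (Ne.symm hib)
              (Ne.symm hic), hg true]; decide),
            W2_big (by rw [sumAbs_quad hab hac (Ne.symm hia) hbc (Ne.symm hib)
              (Ne.symm hic), hg false]; decide)]
          norm_num
  rw [Finset.sum_congr rfl (fun i _ => key i), sum_ite_three_fin hab hac hbc]
  norm_num

end Eta3Aux

open Eta3Aux in
/-- Values of `η₃[l]` at `e₁`, `2e₁+e₂` and `e₁+e₂+e₃`, with `s = 1/(2d)`. -/
theorem eta3_values (d l : ℕ) (hd : 3 ≤ d) (hl : 1 ≤ l) :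
    eta3 d l (Pi.single (⟨0, by omega⟩ : Fin d) 1)
      = 3 * (1 / (2 * (d : ℝ))) ^ (l + 3) * (1 - 1 / (2 * (d : ℝ))) ∧
    eta3 d l (Pi.single (⟨0, by omega⟩ : Fin d) 2 + Pi.single (⟨1, by omega⟩ : Fin d) 1)
      = 3 * (1 / (2 * (d : ℝ))) ^ (l + 4) ∧
    eta3 d l (Pi.single (⟨0, by omega⟩ : Fin d) 1 + Pi.single (⟨1, by omega⟩ : Fin d) 1
        + Pi.single (⟨2, by omega⟩ : Fin d) 1)
      = 6 * (1 / (2 * (d : ℝ))) ^ (l + 4) := by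
  have hd0 : (0:ℝ) < (d:ℝ) := by exact_mod_cast (by omega : 0 < d)
  set a : Fin d := ⟨0, by omega⟩
  set b : Fin d := ⟨1, by omega⟩
  set c : Fin d := ⟨2, by omega⟩
  have hab : a ≠ b := by simp [a, b, Fin.ext_iff]
  have hac : a ≠ c := by simp [a, c, Fin.ext_iff]
  have hbc : b ≠ c := by simp [b, c, Fin.ext_iff]
  refine ⟨?_, ?_, ?_⟩
  · rw [eta3_eq l hl, count_one a]
    have hkey : (1 / (2 * (d:ℝ))) * (6 * (d:ℝ) - 3) = 3 * (1 - 1 / (2 * (d:ℝ))) := by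
      field_simp
      ring
    calc (1 / (2 * (d:ℝ))) ^ (l + 4) * (6 * (d:ℝ) - 3)
        = (1 / (2 * (d:ℝ))) ^ (l + 3) * ((1 / (2 * (d:ℝ))) * (6 * (d:ℝ) - 3)) := by
          rw [pow_succ]; ring
      _ = 3 * (1 / (2 * (d : ℝ))) ^ (l + 3) * (1 - 1 / (2 * (d : ℝ))) := by
          rw [hkey]; ring
  · rw [eta3_eq l hl, count_two hab]
    ring
  · rw [eta3_eq l hl, count_three hab hac hbc]
    ring
end

section
/- Suppose p_c = p_c(d) satisfies p_c = 1 + p_c⁵ s² + (p_c⁵/2)(10 p_c² − 3) s³ + (89/8) s⁴ + O(d^{-5}) as d → ∞, where s = 1/(2d), and suppose additionally |p_c − 1| ≤ C/d for some constant C. Then p_c = 1 + s² + (7/2) s³ + (129/8) s⁴ + O(d^{-5}). -/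
open Filter Asymptotics

/-- Substituting the expansion of `p_c` into its own fixed-point equation:
if `p_c = 1 + p_c⁵ s² + (p_c⁵/2)(10 p_c² − 3) s³ + (89/8) s⁴ + O(d⁻⁵)` with `s = 1/(2d)`
and `|p_c − 1| ≤ C/d`, then `p_c = 1 + s² + (7/2) s³ + (129/8) s⁴ + O(d⁻⁵)`. -/
theorem pc_expansion_selfconsistency (pc : ℕ → ℝ) (C : ℝ)
    (h1 : (fun d : ℕ => pc d -
        (1 + (pc d) ^ 5 * (1 / (2 * (d : ℝ))) ^ 2
          + (pc d) ^ 5 / 2 * (10 * (pc d) ^ 2 - 3) * (1 / (2 * (d : ℝ))) ^ 3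
          + 89 / 8 * (1 / (2 * (d : ℝ))) ^ 4))
        =O[atTop] fun d : ℕ => ((d : ℝ))⁻¹ ^ 5)
    (h2 : ∀ d : ℕ, 1 ≤ d → |pc d - 1| ≤ C / d) :
    (fun d : ℕ => pc d -
        (1 + (1 / (2 * (d : ℝ))) ^ 2 + 7 / 2 * (1 / (2 * (d : ℝ))) ^ 3
          + 129 / 8 * (1 / (2 * (d : ℝ))) ^ 4))
      =O[atTop] fun d : ℕ => ((d : ℝ))⁻¹ ^ 5 := by
  -- abbreviation for d⁻¹
  have hs : (fun d : ℕ => 1 / (2 * (d : ℝ))) =O[atTop] fun d : ℕ => ((d : ℝ))⁻¹ := by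
    apply IsBigO.of_bound 1
    filter_upwards [eventually_ge_atTop 1] with d hd
    have hd1 : (1 : ℝ) ≤ d := by exact_mod_cast hd
    have hd0 : (0 : ℝ) < d := by linarith
    have hle : 1 / (2 * (d : ℝ)) ≤ 1 / d := by
      apply one_div_le_one_div_of_le hd0; linarith
    rw [Real.norm_eq_abs, Real.norm_eq_abs, one_mul,
      abs_of_nonneg (by positivity), abs_of_nonneg (by positivity)]
    simpa [one_div] using hle
  have hsp : ∀ k : ℕ, (fun d : ℕ => (1 / (2 * (d : ℝ))) ^ k)
      =O[atTop] fun d : ℕ => ((d : ℝ))⁻¹ ^ k := fun k => hs.pow k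
  have hub : ∀ a b : ℕ, b ≤ a → (fun d : ℕ => ((d : ℝ))⁻¹ ^ a)
      =O[atTop] fun d : ℕ => ((d : ℝ))⁻¹ ^ b := by
    intro a b hab
    apply IsBigO.of_bound 1
    filter_upwards [eventually_ge_atTop 1] with d hd
    have hd1 : (1 : ℝ) ≤ d := by exact_mod_cast hd
    have h0 : (0 : ℝ) ≤ ((d : ℝ))⁻¹ := by positivity
    have hle1 : ((d : ℝ))⁻¹ ≤ 1 := by
      rw [inv_le_one_iff₀]; right; exact hd1
    rw [Real.norm_eq_abs, Real.norm_eq_abs, one_mul,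
      abs_of_nonneg (pow_nonneg h0 _), abs_of_nonneg (pow_nonneg h0 _)]
    exact pow_le_pow_of_le_one h0 hle1 hab
  -- pc is bounded
  have hB : pc =O[atTop] (fun _ : ℕ => (1 : ℝ)) := by
    apply IsBigO.of_bound (|C| + 1)
    filter_upwards [eventually_ge_atTop 1] with d hd
    have h := h2 d hd
    have hd1 : (1 : ℝ) ≤ d := by exact_mod_cast hd
    have hd0 : (0 : ℝ) < d := by linarith
    have hCd : C / d ≤ |C| := by
      rw [div_le_iff₀ hd0]
      nlinarith [le_abs_self C, abs_nonneg C]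
    have habs : |pc d| - |(1 : ℝ)| ≤ |pc d - 1| := abs_sub_abs_le_abs_sub _ _
    simp only [Real.norm_eq_abs, norm_one, mul_one, abs_one] at *
    linarith
  have hBk : ∀ k : ℕ, (fun d : ℕ => pc d ^ k) =O[atTop] (fun _ : ℕ => (1 : ℝ)) :=
    fun k => by simpa using hB.pow k
  have hOc : ∀ c : ℝ, (fun _ : ℕ => c) =O[atTop] (fun _ : ℕ => (1 : ℝ)) :=
    fun c => isBigO_const_const c one_ne_zero atTop
  -- product of big-O powers
  have hmw : ∀ {f g : ℕ → ℝ} (a b : ℕ),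
      f =O[atTop] (fun d : ℕ => ((d : ℝ))⁻¹ ^ a) →
      g =O[atTop] (fun d : ℕ => ((d : ℝ))⁻¹ ^ b) →
      (fun d : ℕ => f d * g d) =O[atTop] fun d : ℕ => ((d : ℝ))⁻¹ ^ (a + b) := by
    intro f g a b hf hg
    simpa [pow_add] using hf.mul hg
  -- term bounds
  have t2 : (fun d : ℕ => pc d ^ 5 * (1 / (2 * (d : ℝ))) ^ 2)
      =O[atTop] fun d : ℕ => ((d : ℝ))⁻¹ ^ 2 := by
    simpa using (hBk 5).mul (hsp 2)
  have hc3 : (fun d : ℕ => pc d ^ 5 / 2 * (10 * pc d ^ 2 - 3))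
      =O[atTop] (fun _ : ℕ => (1 : ℝ)) := by
    have h72 : (fun d : ℕ => 10 * pc d ^ 2 - 3) =O[atTop] (fun _ : ℕ => (1 : ℝ)) := by
      simpa using ((hBk 2).const_mul_left 10).sub (hOc 3)
    have heq : (fun d : ℕ => pc d ^ 5 / 2 * (10 * pc d ^ 2 - 3))
        = fun d : ℕ => (1 / 2 : ℝ) * (pc d ^ 5 * (10 * pc d ^ 2 - 3)) := by
      funext d; ring
    rw [heq]
    simpa using ((hBk 5).mul h72).const_mul_left (1 / 2)
  have t3 : (fun d : ℕ => pc d ^ 5 / 2 * (10 * pc d ^ 2 - 3) * (1 / (2 * (d : ℝ))) ^ 3)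
      =O[atTop] fun d : ℕ => ((d : ℝ))⁻¹ ^ 3 := by
    simpa using hc3.mul (hsp 3)
  have t4 : (fun d : ℕ => (89 : ℝ) / 8 * (1 / (2 * (d : ℝ))) ^ 4)
      =O[atTop] fun d : ℕ => ((d : ℝ))⁻¹ ^ 4 := by
    simpa using (hOc (89 / 8)).mul (hsp 4)
  -- first bootstrap: pc - 1 = O(d⁻²)
  have he2 : (fun d : ℕ => pc d - 1) =O[atTop] fun d : ℕ => ((d : ℝ))⁻¹ ^ 2 := by
    have key : (fun d : ℕ => pc d - 1)
        = fun d : ℕ => (pc d -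
            (1 + (pc d) ^ 5 * (1 / (2 * (d : ℝ))) ^ 2
              + (pc d) ^ 5 / 2 * (10 * (pc d) ^ 2 - 3) * (1 / (2 * (d : ℝ))) ^ 3
              + 89 / 8 * (1 / (2 * (d : ℝ))) ^ 4))
          + (pc d ^ 5 * (1 / (2 * (d : ℝ))) ^ 2
              + pc d ^ 5 / 2 * (10 * pc d ^ 2 - 3) * (1 / (2 * (d : ℝ))) ^ 3
              + (89 : ℝ) / 8 * (1 / (2 * (d : ℝ))) ^ 4) := by
      funext d; ring
    rw [key]
    exact (h1.trans (hub 5 2 (by norm_num))).add ((t2.add (t3.trans (hub 3 2 (by norm_num)))).add (t4.trans (hub 4 2 (by norm_num))))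
  have hE1 : (fun d : ℕ => pc d - 1) =O[atTop] (fun _ : ℕ => (1 : ℝ)) := by
    refine he2.trans ?_
    simpa using hub 2 0 (by norm_num)
  -- pc^5 - 1 = O(d⁻²)
  have hp5 : (fun d : ℕ => pc d ^ 5 - 1) =O[atTop] fun d : ℕ => ((d : ℝ))⁻¹ ^ 2 := by
    have hq : (fun d : ℕ => pc d ^ 4 + pc d ^ 3 + pc d ^ 2 + pc d + 1)
        =O[atTop] (fun _ : ℕ => (1 : ℝ)) := by
      simpa using ((((hBk 4).add (hBk 3)).add (hBk 2)).add (by simpa using hBk 1)).add (hOc 1)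
    have heq : (fun d : ℕ => pc d ^ 5 - 1)
        = fun d : ℕ => (pc d - 1) * (pc d ^ 4 + pc d ^ 3 + pc d ^ 2 + pc d + 1) := by
      funext d; ring
    rw [heq]
    simpa using he2.mul hq
  -- second bootstrap: pc - 1 - s² = O(d⁻³)
  have he3 : (fun d : ℕ => pc d - 1 - (1 / (2 * (d : ℝ))) ^ 2)
      =O[atTop] fun d : ℕ => ((d : ℝ))⁻¹ ^ 3 := by
    have key : (fun d : ℕ => pc d - 1 - (1 / (2 * (d : ℝ))) ^ 2)
        = fun d : ℕ => (pc d -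
            (1 + (pc d) ^ 5 * (1 / (2 * (d : ℝ))) ^ 2
              + (pc d) ^ 5 / 2 * (10 * (pc d) ^ 2 - 3) * (1 / (2 * (d : ℝ))) ^ 3
              + 89 / 8 * (1 / (2 * (d : ℝ))) ^ 4))
          + (((pc d ^ 5 - 1) * (1 / (2 * (d : ℝ))) ^ 2
              + pc d ^ 5 / 2 * (10 * pc d ^ 2 - 3) * (1 / (2 * (d : ℝ))) ^ 3)
              + (89 : ℝ) / 8 * (1 / (2 * (d : ℝ))) ^ 4) := by
      funext d; ring
    rw [key]
    refine (h1.trans (hub 5 3 (by norm_num))).add (IsBigO.add (IsBigO.add ?_ t3) (t4.trans (hub 4 3 (by norm_num))))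
    exact (by simpa using hmw 2 2 hp5 (hsp 2) : _ =O[atTop] fun d : ℕ => ((d : ℝ))⁻¹ ^ 4).trans (hub 4 3 (by norm_num))
  -- pc^5 - 1 - 5 s² = O(d⁻³)
  have h351 : (fun d : ℕ => pc d ^ 5 - 1 - 5 * (1 / (2 * (d : ℝ))) ^ 2)
      =O[atTop] fun d : ℕ => ((d : ℝ))⁻¹ ^ 3 := by
    have hq2 : (fun d : ℕ => (10 : ℝ) + 10 * (pc d - 1) + 5 * (pc d - 1) ^ 2 + (pc d - 1) ^ 3)
        =O[atTop] (fun _ : ℕ => (1 : ℝ)) := by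
      simpa using (((hOc 10).add (hE1.const_mul_left 10)).add
        ((by simpa using hE1.pow 2 : (fun d : ℕ => (pc d - 1) ^ 2) =O[atTop]
          (fun _ : ℕ => (1 : ℝ))).const_mul_left 5)).add
        (by simpa using hE1.pow 3)
    have hsq : (fun d : ℕ => (pc d - 1) ^ 2 *
        ((10 : ℝ) + 10 * (pc d - 1) + 5 * (pc d - 1) ^ 2 + (pc d - 1) ^ 3))
        =O[atTop] fun d : ℕ => ((d : ℝ))⁻¹ ^ 4 := by
      have he22 : (fun d : ℕ => (pc d - 1) ^ 2) =O[atTop]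
          fun d : ℕ => ((d : ℝ))⁻¹ ^ 4 := by
        simpa [sq] using hmw 2 2 he2 he2
      simpa using he22.mul hq2
    have key : (fun d : ℕ => pc d ^ 5 - 1 - 5 * (1 / (2 * (d : ℝ))) ^ 2)
        = fun d : ℕ => 5 * (pc d - 1 - (1 / (2 * (d : ℝ))) ^ 2)
          + (pc d - 1) ^ 2 *
            ((10 : ℝ) + 10 * (pc d - 1) + 5 * (pc d - 1) ^ 2 + (pc d - 1) ^ 3) := by
      funext d; ring
    rw [key]
    exact (he3.const_mul_left 5).add (hsq.trans (hub 4 3 (by norm_num)))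
  -- the two correction terms
  have hT1 : (fun d : ℕ => (pc d ^ 5 - 1 - 5 * (1 / (2 * (d : ℝ))) ^ 2)
      * (1 / (2 * (d : ℝ))) ^ 2) =O[atTop] fun d : ℕ => ((d : ℝ))⁻¹ ^ 5 := by
    simpa using hmw 3 2 h351 (hsp 2)
  have hT2 : (fun d : ℕ => (pc d - 1) *
      ((10 * pc d ^ 6 + 10 * pc d ^ 5 + 7 * pc d ^ 4 + 7 * pc d ^ 3
        + 7 * pc d ^ 2 + 7 * pc d + 7) / 2) * (1 / (2 * (d : ℝ))) ^ 3)
      =O[atTop] fun d : ℕ => ((d : ℝ))⁻¹ ^ 5 := by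
    have hr : (fun d : ℕ => (10 * pc d ^ 6 + 10 * pc d ^ 5 + 7 * pc d ^ 4 + 7 * pc d ^ 3
        + 7 * pc d ^ 2 + 7 * pc d + 7) / 2) =O[atTop] (fun _ : ℕ => (1 : ℝ)) := by
      have : (fun d : ℕ => 10 * pc d ^ 6 + 10 * pc d ^ 5 + 7 * pc d ^ 4 + 7 * pc d ^ 3
          + 7 * pc d ^ 2 + 7 * pc d + 7) =O[atTop] (fun _ : ℕ => (1 : ℝ)) := by
        simpa using (((((((hBk 6).const_mul_left 10).add ((hBk 5).const_mul_left 10)).add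
          ((hBk 4).const_mul_left 7)).add ((hBk 3).const_mul_left 7)).add
          ((hBk 2).const_mul_left 7)).add
          ((by simpa using hBk 1 : pc =O[atTop] (fun _ : ℕ => (1 : ℝ))).const_mul_left 7)).add
          (hOc 7)
      simpa [div_eq_inv_mul] using this.const_mul_left 2⁻¹
    have hfirst : (fun d : ℕ => (pc d - 1) *
        ((10 * pc d ^ 6 + 10 * pc d ^ 5 + 7 * pc d ^ 4 + 7 * pc d ^ 3
          + 7 * pc d ^ 2 + 7 * pc d + 7) / 2))
        =O[atTop] fun d : ℕ => ((d : ℝ))⁻¹ ^ 2 := by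
      simpa using he2.mul hr
    simpa using hmw 2 3 hfirst (hsp 3)
  -- final assembly
  have key : (fun d : ℕ => pc d -
        (1 + (1 / (2 * (d : ℝ))) ^ 2 + 7 / 2 * (1 / (2 * (d : ℝ))) ^ 3
          + 129 / 8 * (1 / (2 * (d : ℝ))) ^ 4))
      = fun d : ℕ => (pc d -
            (1 + (pc d) ^ 5 * (1 / (2 * (d : ℝ))) ^ 2
              + (pc d) ^ 5 / 2 * (10 * (pc d) ^ 2 - 3) * (1 / (2 * (d : ℝ))) ^ 3
              + 89 / 8 * (1 / (2 * (d : ℝ))) ^ 4))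
        + (pc d ^ 5 - 1 - 5 * (1 / (2 * (d : ℝ))) ^ 2) * (1 / (2 * (d : ℝ))) ^ 2
        + (pc d - 1) *
          ((10 * pc d ^ 6 + 10 * pc d ^ 5 + 7 * pc d ^ 4 + 7 * pc d ^ 3
            + 7 * pc d ^ 2 + 7 * pc d + 7) / 2) * (1 / (2 * (d : ℝ))) ^ 3 := by
    funext d; ring
  rw [key]
  exact (h1.add hT1).add hT2
end
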